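/- For real 2×2 matrices A₁, A₂: PD(A₁) ⊆ PD(A₂) holds if and only if for all λ ∈ ℝ both ‖A₁ + λI‖₂ ≤ ‖A₂ + λI‖₂ and ⌊A₁ + λI⌋₂ ≥ ⌊A₂ + λI⌋₂. -/

import Mathlib

noncomputable def opNorm (A : Matrix (Fin 2) (Fin 2) ℝ) : ℝ :=
  ‖Matrix.toEuclideanCLM (𝕜 := ℝ) (n := Fin 2) A‖

noncomputable def conorm (A : Matrix (Fin 2) (Fin 2) ℝ) : ℝ :=
  Real.sign A.det * (opNorm A⁻¹)⁻¹

noncomputable def arcosh (x : ℝ) : ℝ := Real.log (x + Real.sqrt (x ^ 2 - 1))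

noncomputable def AC (x : ℝ) : ℝ :=
  if x < 1 then Real.arccos x / Real.sqrt (1 - x ^ 2)
  else if x = 1 then 1
  else arcosh x / Real.sqrt (x ^ 2 - 1)

noncomputable def AS (x : ℝ) : ℝ :=
  if x = 1 then Real.sqrt (1 / 3) else Real.sqrt ((AC x ^ 2 - 1) / (1 - x ^ 2))

noncomputable def AT (x : ℝ) : ℝ := (AC x - 1) / AS x

noncomputable def PDcenter (A : Matrix (Fin 2) (Fin 2) ℝ) : ℂ :=
  (((A 0 0 + A 1 1) / 2 : ℝ) : ℂ) + ((|A 1 0 - A 0 1| / 2 : ℝ) : ℂ) * Complex.I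

noncomputable def PDradius (A : Matrix (Fin 2) (Fin 2) ℝ) : ℝ :=
  Real.sqrt (((A 0 0 - A 1 1) / 2) ^ 2 + ((A 0 1 + A 1 0) / 2) ^ 2)

noncomputable def PD (A : Matrix (Fin 2) (Fin 2) ℝ) : Set ℂ :=
  Metric.closedBall (PDcenter A) (PDradius A)

def LogAble (A : Matrix (Fin 2) (Fin 2) ℝ) : Prop :=
  ∀ z ∈ spectrum ℂ (A.map (fun x => (x : ℂ))), ¬(z.im = 0 ∧ z.re ≤ 0)

def IsPrincipalLog (A L : Matrix (Fin 2) (Fin 2) ℝ) : Prop :=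
  NormedSpace.exp L = A ∧
    ∀ z ∈ spectrum ℂ (L.map (fun x => (x : ℂ))), z.im ∈ Set.Ioo (-Real.pi) Real.pi

section Stmt11Aux

private lemma cabs_eq' (u : ℂ) : ‖u‖ = Real.sqrt (u.re^2 + u.im^2) := by
  rw [Complex.norm_def, Complex.normSq_apply]
  ring_nf

private lemma sv_upper' (a b c d s t x0 x1 : ℝ) (hs0 : 0 ≤ s) (ht0 : 0 ≤ t)
    (hs : s^2 = ((a+d)/2)^2 + ((c-b)/2)^2) (ht : t^2 = ((a-d)/2)^2 + ((b+c)/2)^2) :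
    (a*x0+b*x1)^2 + (c*x0+d*x1)^2 ≤ (s+t)^2 * (x0^2+x1^2) := by
  have hK0 : 0 ≤ s * t := mul_nonneg hs0 ht0
  have hβ : ((b^2+d^2-a^2-c^2)/2 + 2*(s*t)) * ((a^2+c^2-b^2-d^2)/2 + 2*(s*t))
      = (a*b+c*d)^2 := by
    have h : (s*t)^2 = (((a+d)/2)^2+((c-b)/2)^2) * (((a-d)/2)^2+((b+c)/2)^2) := by
      rw [mul_pow, hs, ht]
    linear_combination 4 * h
  have hu2 : (s+t)^2 = (a^2+b^2+c^2+d^2)/2 + 2*(s*t) := by linear_combination hs + ht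
  rw [hu2]
  generalize hKK : s * t = K at hβ hK0
  have hc0 : 0 ≤ (b^2+d^2-a^2-c^2)/2 + 2*K := by
    nlinarith [hβ, sq_nonneg (a*b+c*d), hK0, sq_nonneg ((b^2+d^2-a^2-c^2)/2 + 2*K)]
  rcases hc0.eq_or_lt with h | h
  · have hβ0 : a*b+c*d = 0 := by
      have h2 : (a*b+c*d)^2 = 0 := by rw [← hβ, ← h, zero_mul]
      exact pow_eq_zero_iff two_ne_zero |>.mp h2
    have e1 : ((b^2+d^2-a^2-c^2)/2 + 2*K) * x0^2 = 0 := by rw [← h, zero_mul]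
    have e3 : ((b^2+d^2-a^2-c^2)/2 + 2*K) * x1^2 = 0 := by rw [← h, zero_mul]
    have e2 : (a*b+c*d) * (x0*x1) = 0 := by rw [hβ0, zero_mul]
    have e4 : 0 ≤ K * x1^2 := mul_nonneg hK0 (sq_nonneg x1)
    linarith [e1, e2, e3, e4]
  · have key : ((b^2+d^2-a^2-c^2)/2 + 2*K) *
        (((a^2+b^2+c^2+d^2)/2+2*K)*(x0^2+x1^2) - ((a*x0+b*x1)^2+(c*x0+d*x1)^2))
        = (((b^2+d^2-a^2-c^2)/2 + 2*K)*x0 - (a*b+c*d)*x1)^2 := by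
      linear_combination x1^2 * hβ
    have h2 : 0 ≤ ((a^2+b^2+c^2+d^2)/2+2*K)*(x0^2+x1^2)
        - ((a*x0+b*x1)^2+(c*x0+d*x1)^2) :=
      (mul_nonneg_iff_of_pos_left h).mp (key ▸ sq_nonneg _)
    linarith [h2]

private lemma sv_vec' (a b c d s t : ℝ)
    (hs : s^2 = ((a+d)/2)^2 + ((c-b)/2)^2) (ht : t^2 = ((a-d)/2)^2 + ((b+c)/2)^2) :
    ∃ w0 w1 : ℝ, w0^2 + w1^2 ≠ 0 ∧
      (a*w0+b*w1)^2 + (c*w0+d*w1)^2 = (s+t)^2 * (w0^2+w1^2) := by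
  have hβ : ((b^2+d^2-a^2-c^2)/2 + 2*(s*t)) * ((a^2+c^2-b^2-d^2)/2 + 2*(s*t))
      = (a*b+c*d)^2 := by
    have h : (s*t)^2 = (((a+d)/2)^2+((c-b)/2)^2) * (((a-d)/2)^2+((b+c)/2)^2) := by
      rw [mul_pow, hs, ht]
    linear_combination 4 * h
  by_cases h : a*b+c*d = 0 ∧ (b^2+d^2-a^2-c^2)/2 + 2*(s*t) = 0
  · refine ⟨1, 0, by norm_num, ?_⟩
    linear_combination -hs - ht - h.2
  · refine ⟨a*b+c*d, (b^2+d^2-a^2-c^2)/2 + 2*(s*t), ?_, ?_⟩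
    · intro hzero
      have h1 : a*b+c*d = 0 := by nlinarith [sq_nonneg (a*b+c*d), sq_nonneg ((b^2+d^2-a^2-c^2)/2 + 2*(s*t))]
      have h2 : (b^2+d^2-a^2-c^2)/2 + 2*(s*t) = 0 := by nlinarith [sq_nonneg (a*b+c*d), sq_nonneg ((b^2+d^2-a^2-c^2)/2 + 2*(s*t))]
      exact h ⟨h1, h2⟩
    · linear_combination (-((b^2+d^2-a^2-c^2)/2 + 2*(s*t))) * hβ
        - ((a*b+c*d)^2 + ((b^2+d^2-a^2-c^2)/2 + 2*(s*t))^2) * (hs + ht)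

private lemma clm_apply_coord' (A : Matrix (Fin 2) (Fin 2) ℝ) (x : EuclideanSpace ℝ (Fin 2)) (i : Fin 2) :
    (Matrix.toEuclideanCLM (𝕜 := ℝ) (n := Fin 2) A x) i = A i 0 * x 0 + A i 1 * x 1 := by
  have h : (Matrix.toEuclideanCLM (𝕜 := ℝ) (n := Fin 2) A x) i
      = A.mulVec (fun j => x j) i := rfl
  rw [h, Matrix.mulVec, dotProduct, Fin.sum_univ_two]

private lemma euc_norm' (x : EuclideanSpace ℝ (Fin 2)) : ‖x‖ = Real.sqrt (x 0 ^ 2 + x 1 ^ 2) := by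
  rw [EuclideanSpace.norm_eq]
  simp [Fin.sum_univ_two, sq_abs]

private lemma clm_norm_apply' (A : Matrix (Fin 2) (Fin 2) ℝ) (x : EuclideanSpace ℝ (Fin 2)) :
    ‖Matrix.toEuclideanCLM (𝕜 := ℝ) (n := Fin 2) A x‖ =
      Real.sqrt ((A 0 0 * x 0 + A 0 1 * x 1)^2 + (A 1 0 * x 0 + A 1 1 * x 1)^2) := by
  rw [euc_norm', clm_apply_coord', clm_apply_coord']

private lemma opNorm_eq' (A : Matrix (Fin 2) (Fin 2) ℝ) :
    opNorm A = Real.sqrt (((A 0 0 + A 1 1)/2)^2 + ((A 1 0 - A 0 1)/2)^2)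
      + Real.sqrt (((A 0 0 - A 1 1)/2)^2 + ((A 0 1 + A 1 0)/2)^2) := by
  set a := A 0 0 with ha
  set b := A 0 1 with hb
  set c := A 1 0 with hc
  set d := A 1 1 with hd
  set s := Real.sqrt (((a+d)/2)^2 + ((c-b)/2)^2) with hsdef
  set t := Real.sqrt (((a-d)/2)^2 + ((b+c)/2)^2) with htdef
  have hs0 : 0 ≤ s := Real.sqrt_nonneg _
  have ht0 : 0 ≤ t := Real.sqrt_nonneg _
  have hs : s^2 = ((a+d)/2)^2 + ((c-b)/2)^2 := Real.sq_sqrt (by positivity)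
  have ht : t^2 = ((a-d)/2)^2 + ((b+c)/2)^2 := Real.sq_sqrt (by positivity)
  apply le_antisymm
  · apply ContinuousLinearMap.opNorm_le_bound _ (by positivity)
    intro x
    rw [clm_norm_apply', euc_norm']
    have key := sv_upper' a b c d s t (x 0) (x 1) hs0 ht0 hs ht
    calc Real.sqrt ((a * x 0 + b * x 1)^2 + (c * x 0 + d * x 1)^2)
        ≤ Real.sqrt ((s+t)^2 * (x 0 ^2 + x 1 ^2)) := Real.sqrt_le_sqrt key
      _ = (s+t) * Real.sqrt (x 0 ^2 + x 1 ^2) := by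
          rw [Real.sqrt_mul (sq_nonneg _), Real.sqrt_sq (by positivity)]
  · obtain ⟨w0, w1, hne, hw⟩ := sv_vec' a b c d s t hs ht
    set x : EuclideanSpace ℝ (Fin 2) := (WithLp.equiv 2 _).symm ![w0, w1] with hxdef
    have hx0 : x 0 = w0 := rfl
    have hx1 : x 1 = w1 := rfl
    have hnx : ‖x‖ = Real.sqrt (w0^2 + w1^2) := by rw [euc_norm', hx0, hx1]
    have hpos : 0 < ‖x‖ := by
      rw [hnx]
      exact Real.sqrt_pos.mpr (lt_of_le_of_ne (by positivity) (Ne.symm hne))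
    have hTx : ‖Matrix.toEuclideanCLM (𝕜 := ℝ) (n := Fin 2) A x‖ = (s+t) * ‖x‖ := by
      rw [clm_norm_apply', hx0, hx1, hnx, ← ha, ← hb, ← hc, ← hd, hw,
        Real.sqrt_mul (sq_nonneg _), Real.sqrt_sq (by positivity)]
    have hle := (Matrix.toEuclideanCLM (𝕜 := ℝ) (n := Fin 2) A).le_opNorm x
    rw [hTx] at hle
    exact le_of_mul_le_mul_right hle hpos

private lemma conorm_eq' (A : Matrix (Fin 2) (Fin 2) ℝ) :
    conorm A = Real.sqrt (((A 0 0 + A 1 1)/2)^2 + ((A 1 0 - A 0 1)/2)^2)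
      - Real.sqrt (((A 0 0 - A 1 1)/2)^2 + ((A 0 1 + A 1 0)/2)^2) := by
  set a := A 0 0 with ha
  set b := A 0 1 with hb
  set c := A 1 0 with hc
  set d := A 1 1 with hd
  have hdet2 : A.det = a*d - b*c := Matrix.det_fin_two A
  by_cases hdet : A.det = 0
  · have hd2 : a*d - b*c = 0 := by rw [← hdet2]; exact hdet
    have hPQ : ((a+d)/2)^2+((c-b)/2)^2 = ((a-d)/2)^2+((b+c)/2)^2 := by linear_combination hd2
    rw [conorm, hdet, Real.sign_zero, zero_mul, hPQ, sub_self]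
  · have hinv : A⁻¹ = (A.det)⁻¹ • !![d, -b; -c, a] := by
      rw [Matrix.inv_def, Matrix.adjugate_fin_two, Ring.inverse_eq_inv']
    have e00 : A⁻¹ 0 0 = A.det⁻¹ * d := by rw [hinv]; simp
    have e01 : A⁻¹ 0 1 = A.det⁻¹ * (-b) := by rw [hinv]; simp
    have e10 : A⁻¹ 1 0 = A.det⁻¹ * (-c) := by rw [hinv]; simp
    have e11 : A⁻¹ 1 1 = A.det⁻¹ * a := by rw [hinv]; simp
    set s := Real.sqrt (((a+d)/2)^2 + ((c-b)/2)^2) with hsdef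
    set t := Real.sqrt (((a-d)/2)^2 + ((b+c)/2)^2) with htdef
    have hs : s^2 = ((a+d)/2)^2 + ((c-b)/2)^2 := Real.sq_sqrt (by positivity)
    have ht : t^2 = ((a-d)/2)^2 + ((b+c)/2)^2 := Real.sq_sqrt (by positivity)
    have hs0 : 0 ≤ s := Real.sqrt_nonneg _
    have ht0 : 0 ≤ t := Real.sqrt_nonneg _
    have hst : 0 < s + t := by
      rcases (lt_or_eq_of_le (by positivity : (0:ℝ) ≤ s + t)) with h | h
      · exact h
      · exfalso
        have hs' : s = 0 := by linarith
        have ht' : t = 0 := by linarith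
        apply hdet
        rw [hdet2]
        have h1 : ((a+d)/2)^2 + ((c-b)/2)^2 = 0 := by rw [← hs, hs', zero_pow two_ne_zero]
        have h2 : ((a-d)/2)^2 + ((b+c)/2)^2 = 0 := by rw [← ht, ht', zero_pow two_ne_zero]
        nlinarith [sq_nonneg ((a+d)/2), sq_nonneg ((c-b)/2), sq_nonneg ((a-d)/2), sq_nonneg ((b+c)/2)]
    have hop : opNorm A⁻¹ = (s + t) * |A.det|⁻¹ := by
      rw [opNorm_eq', e00, e01, e10, e11]
      have h1 : ((A.det⁻¹ * d + A.det⁻¹ * a)/2)^2 + ((A.det⁻¹ * (-c) - A.det⁻¹ * (-b))/2)^2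
          = (((a+d)/2)^2 + ((c-b)/2)^2) * (A.det⁻¹)^2 := by ring
      have h2 : ((A.det⁻¹ * d - A.det⁻¹ * a)/2)^2 + ((A.det⁻¹ * (-b) + A.det⁻¹ * (-c))/2)^2
          = (((a-d)/2)^2 + ((b+c)/2)^2) * (A.det⁻¹)^2 := by ring
      rw [h1, h2, Real.sqrt_mul (by positivity), Real.sqrt_mul (by positivity),
        Real.sqrt_sq_eq_abs, abs_inv, ← hsdef, ← htdef]
      ring
    rw [conorm, hop]
    have habs : 0 < |A.det| := abs_pos.mpr hdet
    rw [mul_inv, inv_inv]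
    have hsign : Real.sign A.det * ((s+t)⁻¹ * |A.det|) = A.det / (s + t) := by
      rcases lt_or_gt_of_ne hdet with h | h
      · rw [Real.sign_of_neg h, abs_of_neg h, div_eq_mul_inv]; ring
      · rw [Real.sign_of_pos h, abs_of_pos h, div_eq_mul_inv]; ring
    rw [hsign, div_eq_iff (ne_of_gt hst)]
    rw [hdet2]
    linear_combination ht - hs

private lemma subset_imp' (m₁ m₂ : ℂ) (r₁ r₂ : ℝ) (h0 : 0 ≤ r₁)
    (h : Metric.closedBall m₁ r₁ ⊆ Metric.closedBall m₂ r₂) :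
    dist m₁ m₂ + r₁ ≤ r₂ := by
  by_cases heq : m₁ = m₂
  · subst heq
    simp only [dist_self, zero_add]
    have hp : m₁ + r₁ ∈ Metric.closedBall m₁ r₁ := by
      simp [Complex.dist_eq, abs_of_nonneg h0]
    have := h hp
    simpa [Complex.dist_eq, abs_of_nonneg h0] using this
  · set d := dist m₁ m₂ with hd
    have hdpos : 0 < d := dist_pos.mpr heq
    set u : ℂ := (m₁ - m₂) / (d : ℝ) with hu
    have habs : ‖u‖ = 1 := by
      rw [hu, norm_div, Complex.norm_real, Real.norm_eq_abs, abs_of_pos hdpos]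
      rw [hd, Complex.dist_eq]
      exact div_self (by rw [← Complex.dist_eq, ← hd]; exact ne_of_gt hdpos)
    have hp : m₁ + r₁ • u ∈ Metric.closedBall m₁ r₁ := by
      simp only [Metric.mem_closedBall, Complex.dist_eq, add_sub_cancel_left]
      rw [Complex.real_smul, norm_mul, Complex.norm_real, Real.norm_eq_abs, habs, mul_one, abs_of_nonneg h0]
    have hkey : m₁ + r₁ • u - m₂ = ((d + r₁ : ℝ) : ℂ) * u := by
      rw [hu]
      have h2 : m₁ - m₂ = (d : ℂ) * u := by
        rw [hu, mul_comm, div_mul_cancel₀]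
        simp only [ne_eq, Complex.ofReal_eq_zero]
        exact ne_of_gt hdpos
      push_cast
      rw [Complex.real_smul]
      linear_combination h2
    have := h hp
    rw [Metric.mem_closedBall, Complex.dist_eq, hkey, norm_mul, Complex.norm_real, Real.norm_eq_abs, habs,
      mul_one, abs_of_nonneg (by positivity)] at this
    linarith

private lemma helper2' (a1 a2 p s : ℝ)
    (h : ∀ x : ℝ, Real.sqrt ((a2 - x)^2 + p^2) ≤ Real.sqrt ((a1 - x)^2 + p^2) + s) :
    a2 - a1 ≤ s := by
  refine le_of_forall_pos_le_add fun ε hε => ?_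
  set x := a1 - (p^2/(2*ε) + 1) with hx
  have h1 : a1 - x = p^2/(2*ε) + 1 := by rw [hx]; ring
  have h1pos : 0 < a1 - x := by rw [h1]; positivity
  have h2 : Real.sqrt ((a1 - x)^2 + p^2) ≤ (a1 - x) + ε := by
    have hsq : (a1-x)^2 + p^2 ≤ ((a1-x) + ε)^2 := by
      have h3 : p^2 + 2*ε ≤ 2*ε*(a1-x) := by
        rw [h1, mul_add, mul_div_cancel₀ _ (by positivity : (2*ε) ≠ 0)]
        linarith
      nlinarith [sq_nonneg ε]
    calc Real.sqrt ((a1-x)^2 + p^2) ≤ Real.sqrt (((a1-x)+ε)^2) := Real.sqrt_le_sqrt hsq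
      _ = (a1-x)+ε := Real.sqrt_sq (by positivity)
  have h3 : a2 - x ≤ Real.sqrt ((a2 - x)^2 + p^2) := by
    calc a2 - x ≤ |a2 - x| := le_abs_self _
      _ = Real.sqrt ((a2-x)^2) := (Real.sqrt_sq_eq_abs _).symm
      _ ≤ _ := Real.sqrt_le_sqrt (by nlinarith [sq_nonneg p])
  have h4 := (h3.trans (h x))
  linarith

private lemma helper' (z w : ℂ) (hz : 0 ≤ z.im) (hle : z.im ≤ w.im) (s : ℝ)
    (h1 : ∀ x : ℝ, ‖w - x‖ ≤ ‖z - x‖ + s)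
    (h2 : ∀ x : ℝ, ‖z - x‖ ≤ ‖w - x‖ + s) :
    dist z w ≤ s := by
  rcases hle.eq_or_lt with heq | hlt
  · rw [Complex.dist_eq_re_im, heq, sub_self, zero_pow two_ne_zero, add_zero,
      Real.sqrt_sq_eq_abs, abs_sub_le_iff]
    constructor
    · refine helper2' w.re z.re z.im s fun x => ?_
      have := h2 x
      rw [cabs_eq', cabs_eq'] at this
      simpa [heq] using this
    · refine helper2' z.re w.re z.im s fun x => ?_
      have := h1 x
      rw [cabs_eq', cabs_eq'] at this
      simpa [heq] using this
  · have hwim : 0 < w.im := lt_of_le_of_lt hz hlt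
    set x : ℝ := (w.im * z.re - z.im * w.re) / (w.im - z.im) with hxdef
    set t : ℝ := z.im / w.im with htdef
    have ht0 : 0 ≤ t := div_nonneg hz hwim.le
    have ht1 : t < 1 := (div_lt_one hwim).mpr hlt
    have hne5 : w.im - z.im ≠ 0 := ne_of_gt (by linarith)
    have hne6 : w.im ≠ 0 := ne_of_gt hwim
    have hzx : z - (x:ℂ) = (t:ℂ) * (w - x) := by
      apply Complex.ext
      · simp only [Complex.sub_re, Complex.ofReal_re, Complex.mul_re, Complex.ofReal_im,
          Complex.sub_im]
        rw [htdef, hxdef]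
        field_simp
        ring
      · simp only [Complex.sub_im, Complex.ofReal_im, Complex.mul_im, Complex.ofReal_re,
          Complex.sub_re]
        rw [htdef]
        field_simp
        ring
    have habs1 : ‖z - x‖ = t * ‖w - x‖ := by
      rw [hzx, norm_mul, Complex.norm_real, Real.norm_eq_abs, abs_of_nonneg ht0]
    have hkey : z - w = ((t - 1 : ℝ) : ℂ) * (w - x) := by
      push_cast
      linear_combination hzx
    have habs2 : dist z w = (1 - t) * ‖w - x‖ := by
      rw [Complex.dist_eq, hkey, norm_mul, Complex.norm_real, Real.norm_eq_abs, abs_of_neg (by linarith)]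
      ring
    have h5 := h1 x
    rw [habs1] at h5
    rw [habs2]
    linarith

private lemma center_im_nonneg (A : Matrix (Fin 2) (Fin 2) ℝ) : 0 ≤ (PDcenter A).im := by
  simp [PDcenter]
  positivity

private lemma opNorm_shift (A : Matrix (Fin 2) (Fin 2) ℝ) (lam : ℝ) :
    opNorm (A + lam • (1 : Matrix (Fin 2) (Fin 2) ℝ))
      = ‖PDcenter A + lam‖ + PDradius A := by
  have e00 : (A + lam • (1 : Matrix (Fin 2) (Fin 2) ℝ)) 0 0 = A 0 0 + lam := by
    simp [Matrix.one_apply]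
  have e01 : (A + lam • (1 : Matrix (Fin 2) (Fin 2) ℝ)) 0 1 = A 0 1 := by
    simp [Matrix.one_apply]
  have e10 : (A + lam • (1 : Matrix (Fin 2) (Fin 2) ℝ)) 1 0 = A 1 0 := by
    simp [Matrix.one_apply]
  have e11 : (A + lam • (1 : Matrix (Fin 2) (Fin 2) ℝ)) 1 1 = A 1 1 + lam := by
    simp [Matrix.one_apply]
  rw [opNorm_eq', e00, e01, e10, e11, cabs_eq']
  have hre : (PDcenter A + (lam:ℂ)).re = (A 0 0 + A 1 1)/2 + lam := by
    simp [PDcenter]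
  have him : (PDcenter A + (lam:ℂ)).im = |A 1 0 - A 0 1|/2 := by
    simp [PDcenter]
  rw [hre, him, PDradius]
  have habs2 : (|A 1 0 - A 0 1| / 2) ^ 2 = ((A 1 0 - A 0 1)/2)^2 := by
    rw [div_pow, div_pow, sq_abs]
  congr 2
  · rw [habs2]
    ring
  · ring

private lemma conorm_shift (A : Matrix (Fin 2) (Fin 2) ℝ) (lam : ℝ) :
    conorm (A + lam • (1 : Matrix (Fin 2) (Fin 2) ℝ))
      = ‖PDcenter A + lam‖ - PDradius A := by
  have e00 : (A + lam • (1 : Matrix (Fin 2) (Fin 2) ℝ)) 0 0 = A 0 0 + lam := by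
    simp [Matrix.one_apply]
  have e01 : (A + lam • (1 : Matrix (Fin 2) (Fin 2) ℝ)) 0 1 = A 0 1 := by
    simp [Matrix.one_apply]
  have e10 : (A + lam • (1 : Matrix (Fin 2) (Fin 2) ℝ)) 1 0 = A 1 0 := by
    simp [Matrix.one_apply]
  have e11 : (A + lam • (1 : Matrix (Fin 2) (Fin 2) ℝ)) 1 1 = A 1 1 + lam := by
    simp [Matrix.one_apply]
  rw [conorm_eq', e00, e01, e10, e11, cabs_eq']
  have hre : (PDcenter A + (lam:ℂ)).re = (A 0 0 + A 1 1)/2 + lam := by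
    simp [PDcenter]
  have him : (PDcenter A + (lam:ℂ)).im = |A 1 0 - A 0 1|/2 := by
    simp [PDcenter]
  rw [hre, him, PDradius]
  have habs2 : (|A 1 0 - A 0 1| / 2) ^ 2 = ((A 1 0 - A 0 1)/2)^2 := by
    rw [div_pow, div_pow, sq_abs]
  congr 2
  · rw [habs2]
    ring
  · ring

end Stmt11Aux

theorem stmt11 (A₁ A₂ : Matrix (Fin 2) (Fin 2) ℝ) :
    PD A₁ ⊆ PD A₂ ↔
      ∀ lam : ℝ,
        opNorm (A₁ + lam • (1 : Matrix (Fin 2) (Fin 2) ℝ)) ≤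
            opNorm (A₂ + lam • (1 : Matrix (Fin 2) (Fin 2) ℝ)) ∧
        conorm (A₂ + lam • (1 : Matrix (Fin 2) (Fin 2) ℝ)) ≤
            conorm (A₁ + lam • (1 : Matrix (Fin 2) (Fin 2) ℝ)) := by
  have hr₁ : 0 ≤ PDradius A₁ := Real.sqrt_nonneg _
  have hr₂ : 0 ≤ PDradius A₂ := Real.sqrt_nonneg _
  have ecast : ∀ (m : ℂ) (x : ℝ), m + ((-x : ℝ) : ℂ) = m - x := by
    intro m x; push_cast; ring
  constructor
  · intro h lam
    have hd : dist (PDcenter A₁) (PDcenter A₂) + PDradius A₁ ≤ PDradius A₂ :=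
      subset_imp' _ _ _ _ hr₁ h
    rw [opNorm_shift, opNorm_shift, conorm_shift, conorm_shift]
    have t1 : ‖PDcenter A₁ + lam‖ - ‖PDcenter A₂ + lam‖
        ≤ dist (PDcenter A₁) (PDcenter A₂) := by
      rw [Complex.dist_eq]
      have := norm_sub_norm_le (PDcenter A₁ + (lam:ℂ)) (PDcenter A₂ + (lam:ℂ))
      simpa [add_sub_add_right_eq_sub] using this
    have t2 : ‖PDcenter A₂ + lam‖ - ‖PDcenter A₁ + lam‖
        ≤ dist (PDcenter A₁) (PDcenter A₂) := by
      rw [dist_comm, Complex.dist_eq]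
      have := norm_sub_norm_le (PDcenter A₂ + (lam:ℂ)) (PDcenter A₁ + (lam:ℂ))
      simpa [add_sub_add_right_eq_sub] using this
    exact ⟨by linarith, by linarith⟩
  · intro h
    have key : dist (PDcenter A₁) (PDcenter A₂) ≤ PDradius A₂ - PDradius A₁ := by
      rcases le_total (PDcenter A₁).im (PDcenter A₂).im with hle | hle
      · refine helper' _ _ (center_im_nonneg A₁) hle _ (fun x => ?_) (fun x => ?_)
        · have h2 := (h (-x)).2
          rw [conorm_shift, conorm_shift, ecast, ecast] at h2
          linarith
        · have h1 := (h (-x)).1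
          rw [opNorm_shift, opNorm_shift, ecast, ecast] at h1
          linarith
      · rw [dist_comm]
        refine helper' _ _ (center_im_nonneg A₂) hle _ (fun x => ?_) (fun x => ?_)
        · have h1 := (h (-x)).1
          rw [opNorm_shift, opNorm_shift, ecast, ecast] at h1
          linarith
        · have h2 := (h (-x)).2
          rw [conorm_shift, conorm_shift, ecast, ecast] at h2
          linarith
    intro p hp
    have hp1 : dist p (PDcenter A₁) ≤ PDradius A₁ := hp
    have htri := dist_triangle p (PDcenter A₁) (PDcenter A₂)
    have : dist p (PDcenter A₂) ≤ PDradius A₂ := by linarith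
    exact this
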